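/- arXiv:2108.12653 — 6 statements merged into one kernel-verified Lean document; each statement's English description precedes it below -/
import Mathlib

section
/- Let f be a monic complex polynomial of degree q ≥ 2. Then the complement Ω_f := ℂ \ K(f) of the filled Julia set is connected. -/
/-- The filled Julia set of a polynomial `f`: the set of points whose forward orbit
under `f` is bounded. -/
def filledJulia (f : Polynomial ℂ) : Set ℂ :=
  {z : ℂ | Bornology.IsBounded (Set.range fun n : ℕ => (fun w : ℂ => f.eval w)^[n] z)}

/-- For a monic polynomial of degree `q ≥ 2`, the complement of the filled Julia set
is connected. -/
theorem stmt_2 (q : ℕ) (hq : 2 ≤ q) (f : Polynomial ℂ)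
    (hmonic : f.Monic) (hdeg : f.natDegree = q) :
    IsConnected (filledJulia f)ᶜ := by
  classical
  set F : ℂ → ℂ := fun w : ℂ => f.eval w with hF
  set C : ℝ := ∑ i ∈ Finset.range q, ‖f.coeff i‖ with hC
  have hC0 : 0 ≤ C := Finset.sum_nonneg fun i _ => norm_nonneg _
  set R : ℝ := max 1 (C + 2) with hRdef
  have hR1 : (1 : ℝ) ≤ R := le_max_left _ _
  have hR0 : (0 : ℝ) < R := lt_of_lt_of_le one_pos hR1
  -- key escape estimate
  have key : ∀ z : ℂ, R ≤ ‖z‖ → 2 * ‖z‖ ≤ ‖F z‖ := by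
    intro z hz
    have hz1 : (1 : ℝ) ≤ ‖z‖ := le_trans hR1 hz
    have hzC : C + 2 ≤ ‖z‖ := le_trans (le_max_right _ _) hz
    have heval : F z = (∑ i ∈ Finset.range q, f.coeff i * z ^ i) + z ^ q := by
      have h1 : F z = ∑ i ∈ Finset.range (q + 1), f.coeff i * z ^ i := by
        simpa [hdeg] using Polynomial.eval_eq_sum_range (p := f) z
      have h2 : f.coeff q = 1 := by
        have := hmonic.coeff_natDegree
        rwa [hdeg] at this
      rw [h1, Finset.sum_range_succ, h2, one_mul]
    have hS : ‖∑ i ∈ Finset.range q, f.coeff i * z ^ i‖ ≤ C * ‖z‖ ^ (q - 1) := by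
      calc ‖∑ i ∈ Finset.range q, f.coeff i * z ^ i‖
          ≤ ∑ i ∈ Finset.range q, ‖f.coeff i * z ^ i‖ := norm_sum_le _ _
        _ ≤ ∑ i ∈ Finset.range q, ‖f.coeff i‖ * ‖z‖ ^ (q - 1) := by
            refine Finset.sum_le_sum fun i hi => ?_
            rw [norm_mul, norm_pow]
            have hiq : i < q := Finset.mem_range.mp hi
            exact mul_le_mul_of_nonneg_left
              (pow_le_pow_right₀ hz1 (by omega)) (norm_nonneg _)
        _ = C * ‖z‖ ^ (q - 1) := by rw [← Finset.sum_mul]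
    have hzq : ‖z‖ ^ q = ‖z‖ ^ (q - 1) * ‖z‖ := by
      rw [← pow_succ]
      congr 1
      omega
    have hlow : (‖z‖ - C) * ‖z‖ ^ (q - 1) ≤ ‖F z‖ := by
      have := norm_sub_norm_le (z ^ q) (-(∑ i ∈ Finset.range q, f.coeff i * z ^ i))
      have h3 : ‖z ^ q - -(∑ i ∈ Finset.range q, f.coeff i * z ^ i)‖ = ‖F z‖ := by
        rw [sub_neg_eq_add, heval, add_comm]
      rw [h3, norm_neg, norm_pow] at this
      calc (‖z‖ - C) * ‖z‖ ^ (q - 1)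
          = ‖z‖ ^ q - C * ‖z‖ ^ (q - 1) := by rw [hzq]; ring
        _ ≤ ‖z‖ ^ q - ‖∑ i ∈ Finset.range q, f.coeff i * z ^ i‖ := by linarith
        _ ≤ ‖F z‖ := this
    have h2C : 2 ≤ ‖z‖ - C := by linarith
    have hpow : ‖z‖ ≤ ‖z‖ ^ (q - 1) := by
      calc ‖z‖ = ‖z‖ ^ 1 := (pow_one _).symm
        _ ≤ ‖z‖ ^ (q - 1) := pow_le_pow_right₀ hz1 (by omega)
    calc 2 * ‖z‖ ≤ 2 * ‖z‖ ^ (q - 1) := by nlinarith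
      _ ≤ (‖z‖ - C) * ‖z‖ ^ (q - 1) := by nlinarith [pow_nonneg (norm_nonneg z) (q-1)]
      _ ≤ ‖F z‖ := hlow
  -- iterated escape
  have hiter : ∀ z : ℂ, R ≤ ‖z‖ → ∀ n : ℕ, 2 ^ n * ‖z‖ ≤ ‖F^[n] z‖ := by
    intro z hz n
    induction n with
    | zero => simp
    | succ n ih =>
      have hRn : R ≤ ‖F^[n] z‖ := by
        have h1 : (1:ℝ) ≤ 2 ^ n := one_le_pow₀ (by norm_num)
        nlinarith [norm_nonneg z]
      rw [Function.iterate_succ_apply']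
      calc 2 ^ (n+1) * ‖z‖ = 2 * (2 ^ n * ‖z‖) := by ring
        _ ≤ 2 * ‖F^[n] z‖ := by linarith
        _ ≤ ‖F (F^[n] z)‖ := key _ hRn
  -- points with big norm are not in the filled Julia set
  have hnotin : ∀ z : ℂ, R ≤ ‖z‖ → z ∉ filledJulia f := by
    intro z hz hmem
    rw [filledJulia, Set.mem_setOf_eq] at hmem
    obtain ⟨M, hM⟩ := hmem.exists_norm_le
    obtain ⟨n, hn⟩ := exists_nat_gt M
    have h1 : ‖F^[n] z‖ ≤ M := hM _ ⟨n, rfl⟩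
    have h2 : (n : ℝ) ≤ 2 ^ n := by
      calc (n:ℝ) ≤ ((2 ^ n : ℕ) : ℝ) := by exact_mod_cast (Nat.lt_two_pow_self (n := n)).le
        _ = 2 ^ n := by push_cast; ring
    have h3 : (2:ℝ) ^ n ≤ 2 ^ n * ‖z‖ := by nlinarith [one_le_pow₀ (show (1:ℝ) ≤ 2 by norm_num) (n := n)]
    have := hiter z hz n
    linarith
  -- membership characterization: bounded orbit means all iterates small
  have hsmall : ∀ z ∈ filledJulia f, ∀ n : ℕ, ‖F^[n] z‖ < R := by
    intro z hz n
    rw [filledJulia, Set.mem_setOf_eq] at hz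
    by_contra h
    push_neg at h
    have : F^[n] z ∉ filledJulia f := hnotin _ h
    apply this
    rw [filledJulia, Set.mem_setOf_eq]
    apply hz.subset
    rintro w ⟨m, rfl⟩
    exact ⟨m + n, by simp [Function.iterate_add_apply]; rfl⟩
  -- the filled Julia set is closed
  have hKclosed : IsClosed (filledJulia f) := by
    have : filledJulia f = ⋂ n : ℕ, (fun z => F^[n] z) ⁻¹' Metric.closedBall 0 R := by
      ext z
      simp only [Set.mem_iInter, Set.mem_preimage, Metric.mem_closedBall, dist_zero_right]
      constructor
      · exact fun hz n => (hsmall z hz n).le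
      · intro h
        apply Bornology.IsBounded.subset (Metric.isBounded_closedBall (x := (0:ℂ)) (r := R))
        rintro w ⟨n, rfl⟩
        simpa [dist_zero_right] using h n
    rw [this]
    exact isClosed_iInter fun n =>
      IsClosed.preimage ((f.continuous_aeval).iterate n |>.congr (by simp [hF, Polynomial.aeval_def])) Metric.isClosed_closedBall
  set Om : Set ℂ := (filledJulia f)ᶜ with hOm
  set A : Set ℂ := {z : ℂ | R < ‖z‖} with hA
  have hAsub : A ⊆ Om := fun z hz => hnotin z (le_of_lt hz)
  have hOmopen : IsOpen Om := hKclosed.isOpen_compl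
  -- A is connected
  have hAconn : IsConnected A := by
    have h1 : IsConnected (Metric.sphere (0:ℂ) 1 ×ˢ Set.Ioi R) :=
      (isConnected_sphere (by rw [Complex.rank_real_complex]; norm_num) 0 zero_le_one).prod
        isConnected_Ioi
    have h2 := h1.image (fun p : ℂ × ℝ => p.2 • p.1)
      ((continuous_snd.smul continuous_fst).continuousOn)
    convert h2 using 1
    ext z
    simp only [hA, Set.mem_setOf_eq, Set.mem_image, Set.mem_prod, mem_sphere_zero_iff_norm,
      Set.mem_Ioi, Prod.exists]
    constructor
    · intro hz
      have hz0 : (0:ℝ) < ‖z‖ := lt_trans hR0 hz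
      refine ⟨(‖z‖ : ℝ)⁻¹ • z, ‖z‖, ⟨?_, hz⟩, ?_⟩
      · rw [norm_smul, norm_inv, Real.norm_eq_abs, abs_of_pos hz0]
        field_simp
      · rw [smul_smul]
        rw [mul_inv_cancel₀ (ne_of_gt hz0), one_smul]
    · rintro ⟨s, t, ⟨hs, ht⟩, rfl⟩
      rw [norm_smul, hs, Real.norm_eq_abs, abs_of_pos (lt_trans hR0 ht), mul_one]
      exact ht
  -- every connected component of Om meets A
  have hmeet : ∀ z ∈ Om, (connectedComponentIn Om z ∩ A).Nonempty := by
    intro z hz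
    by_contra hne
    rw [Set.not_nonempty_iff_eq_empty] at hne
    set U := connectedComponentIn Om z with hU
    have hUopen : IsOpen U := hOmopen.connectedComponentIn
    have hUsub : U ⊆ Metric.closedBall 0 R := by
      intro w hw
      rw [Metric.mem_closedBall, dist_zero_right]
      by_contra hw2
      push_neg at hw2
      exact Set.eq_empty_iff_forall_notMem.mp hne w ⟨hw, hw2⟩
    have hUb : Bornology.IsBounded U := Metric.isBounded_closedBall.subset hUsub
    have hfrU : frontier U = closure U \ U := hUopen.frontier_eq
    have hfr : frontier U ⊆ filledJulia f := by
      intro w hw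
      rw [hfrU] at hw
      by_contra hwK
      have hwOm : w ∈ Om := hwK
      have hwO : IsOpen (connectedComponentIn Om w) := hOmopen.connectedComponentIn
      obtain ⟨u, huw, huU⟩ :=
        mem_closure_iff.mp hw.1 _ hwO (mem_connectedComponentIn hwOm)
      have e1 : connectedComponentIn Om w = connectedComponentIn Om u :=
        connectedComponentIn_eq huw
      have e2 : U = connectedComponentIn Om u := connectedComponentIn_eq huU
      have : w ∈ U := by rw [hU, ← hU, e2, ← e1]; exact mem_connectedComponentIn hwOm
      exact hw.2 this
    have hbound : ∀ n : ℕ, ‖F^[n] z‖ ≤ R := by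
      intro n
      have hd : DiffContOnCl ℂ (F^[n]) U :=
        ((Polynomial.differentiable f).iterate n).diffContOnCl
      exact Complex.norm_le_of_forall_mem_frontier_norm_le hUb hd
        (fun w hw => (hsmall w (hfr hw) n).le)
        (subset_closure (mem_connectedComponentIn hz))
    have hzK : z ∈ filledJulia f := by
      rw [filledJulia, Set.mem_setOf_eq]
      apply (Metric.isBounded_closedBall (x := (0:ℂ)) (r := R)).subset
      rintro w ⟨n, rfl⟩
      simpa [dist_zero_right] using hbound n
    exact hz hzK
  -- assemble
  have haA : ((R + 1 : ℝ) : ℂ) ∈ A := by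
    rw [hA, Set.mem_setOf_eq, Complex.norm_real, Real.norm_eq_abs, abs_of_pos (by linarith)]
    linarith
  constructor
  · exact ⟨_, hAsub haA⟩
  · have hdecomp : Om = ⋃₀ {s : Set ℂ | ∃ z ∈ Om, s = connectedComponentIn Om z ∪ A} := by
      ext w
      constructor
      · intro hw
        exact ⟨_, ⟨w, hw, rfl⟩, Or.inl (mem_connectedComponentIn hw)⟩
      · rintro ⟨s, ⟨z, hz, rfl⟩, hws⟩
        rcases hws with h | h
        · exact connectedComponentIn_subset _ _ h
        · exact hAsub h
    rw [hdecomp]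
    apply isPreconnected_sUnion ((R + 1 : ℝ) : ℂ)
    · rintro s ⟨z, hz, rfl⟩
      exact Or.inr haA
    · rintro s ⟨z, hz, rfl⟩
      obtain ⟨b, hb1, hb2⟩ := hmeet z hz
      exact IsPreconnected.union b hb1 hb2 isPreconnected_connectedComponentIn
        hAconn.isPreconnected
end

section
/- Let f be a monic complex polynomial of degree q ≥ 2 and let z ∈ ℂ. Then the forward orbit {f^[n](z) : n ∈ ℕ} is unbounded if and only if |f^[n](z)| → ∞ as n → ∞. In particular the complement of the filled Julia set K(f) coincides with the attracting basin of infinity. -/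
open Filter Polynomial

lemma grow (q : ℕ) (hq : 2 ≤ q) (f : Polynomial ℂ)
    (hmonic : f.Monic) (hdeg : f.natDegree = q) :
    ∃ R : ℝ, 1 ≤ R ∧ ∀ z : ℂ, R ≤ ‖z‖ → 2 * ‖z‖ ≤ ‖f.eval z‖ := by
  set C : ℝ := ∑ i ∈ Finset.range q, ‖f.coeff i‖ with hC
  have hC0 : 0 ≤ C := Finset.sum_nonneg fun i _ => (norm_nonneg _)
  refine ⟨C + 2, by linarith, fun z hz => ?_⟩
  have hz1 : (1:ℝ) ≤ ‖z‖ := by linarith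
  set s : ℂ := ∑ i ∈ Finset.range q, f.coeff i * z ^ i with hs
  have heval : f.eval z = s + z ^ q := by
    have := Polynomial.eval_eq_sum_range (p := f) z
    rw [hdeg] at this
    rw [this, Finset.sum_range_succ, ← hdeg, hmonic.coeff_natDegree, hdeg, one_mul]
  have hsum : ‖s‖ ≤ C * ‖z‖ ^ (q - 1) := by
    calc ‖s‖
        ≤ ∑ i ∈ Finset.range q, ‖f.coeff i * z ^ i‖ := norm_sum_le _ _
      _ ≤ ∑ i ∈ Finset.range q, ‖f.coeff i‖ * ‖z‖ ^ (q - 1) := by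
          refine Finset.sum_le_sum fun i hi => ?_
          rw [norm_mul, norm_pow]
          refine mul_le_mul_of_nonneg_left ?_ (norm_nonneg _)
          exact pow_le_pow_right₀ hz1 (by simp at hi; omega)
      _ = C * ‖z‖ ^ (q - 1) := by rw [← Finset.sum_mul]
  have h1 : ‖z‖ ^ q - ‖s‖ ≤ ‖f.eval z‖ := by
    have h := norm_sub_le (f.eval z) s
    have hzq : f.eval z - s = z ^ q := by rw [heval]; ring
    rw [hzq, norm_pow] at h
    linarith
  have hpow : ‖z‖ ≤ ‖z‖ ^ (q - 1) := le_self_pow₀ hz1 (by omega)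
  have hzq : ‖z‖ ^ q = ‖z‖ ^ (q - 1) * ‖z‖ := by
    rw [← pow_succ]; congr 1; omega
  nlinarith [pow_nonneg (norm_nonneg z) (q - 1)]

lemma iter_grow (f : Polynomial ℂ) (R : ℝ) (hR : 1 ≤ R)
    (h : ∀ z : ℂ, R ≤ ‖z‖ → 2 * ‖z‖ ≤ ‖f.eval z‖) :
    ∀ (n : ℕ) (w : ℂ), R ≤ ‖w‖ →
      2 ^ n * ‖w‖ ≤ ‖(fun w : ℂ => f.eval w)^[n] w‖ := by
  intro n
  induction n with
  | zero => intro w hw; simp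
  | succ n ih =>
    intro w hw
    have h2 : 2 * ‖w‖ ≤ ‖f.eval w‖ := h w hw
    have hRf : R ≤ ‖f.eval w‖ := by nlinarith [norm_nonneg w]
    have := ih (f.eval w) hRf
    rw [Function.iterate_succ_apply]
    have h2n : (0:ℝ) < 2 ^ n := by positivity
    calc 2 ^ (n+1) * ‖w‖ = 2 ^ n * (2 * ‖w‖) := by ring
      _ ≤ 2 ^ n * ‖f.eval w‖ := by nlinarith
      _ ≤ _ := this


/-- For a monic polynomial of degree `q ≥ 2`, the forward orbit of a point is unbounded
iff the iterates tend to infinity in absolute value; in particular the complement of the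
filled Julia set is the attracting basin of infinity. -/
theorem stmt_3 (q : ℕ) (hq : 2 ≤ q) (f : Polynomial ℂ)
    (hmonic : f.Monic) (hdeg : f.natDegree = q) :
    (∀ z : ℂ,
      ¬ Bornology.IsBounded (Set.range fun n : ℕ => (fun w : ℂ => f.eval w)^[n] z) ↔
        Filter.Tendsto (fun n : ℕ => ‖(fun w : ℂ => f.eval w)^[n] z‖)
          Filter.atTop Filter.atTop) ∧
    (filledJulia f)ᶜ =
      {z : ℂ | Filter.Tendsto (fun n : ℕ => ‖(fun w : ℂ => f.eval w)^[n] z‖)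
          Filter.atTop Filter.atTop} := by
  have main : ∀ z : ℂ,
      ¬ Bornology.IsBounded (Set.range fun n : ℕ => (fun w : ℂ => f.eval w)^[n] z) ↔
        Filter.Tendsto (fun n : ℕ => ‖(fun w : ℂ => f.eval w)^[n] z‖)
          Filter.atTop Filter.atTop := by
    obtain ⟨R, hR1, hR⟩ := grow q hq f hmonic hdeg
    intro z
    constructor
    · intro hub
      rw [isBounded_iff_forall_norm_le] at hub
      push_neg at hub
      obtain ⟨x, ⟨N, rfl⟩, hx⟩ := hub R
      have hRN : R ≤ ‖(fun w : ℂ => f.eval w)^[N] z‖ := by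
        linarith
      rw [← Filter.tendsto_add_atTop_iff_nat N]
      have key : ∀ m : ℕ, 2 ^ m * R ≤ ‖(fun w : ℂ => f.eval w)^[m + N] z‖ := by
        intro m
        have := iter_grow f R hR1 hR m _ hRN
        rw [← Function.iterate_add_apply] at this
        have h2m : (0:ℝ) < 2 ^ m := by positivity
        nlinarith
      refine tendsto_atTop_mono key ?_
      have : Tendsto (fun m : ℕ => (2:ℝ) ^ m) atTop atTop :=
        tendsto_pow_atTop_atTop_of_one_lt one_lt_two
      exact Tendsto.atTop_mul_const (by linarith) this
    · intro ht hb
      rw [isBounded_iff_forall_norm_le] at hb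
      obtain ⟨M, hM⟩ := hb
      obtain ⟨n, hn⟩ := (ht.eventually_gt_atTop M).exists
      have := hM _ ⟨n, rfl⟩
      linarith
  refine ⟨main, ?_⟩
  ext z
  simpa [filledJulia, Set.mem_compl_iff, Set.mem_setOf_eq] using main z
end

section
/- (Böttcher's theorem near infinity.) Let f be a monic complex polynomial of degree q ≥ 2. Then there exist R > 0 and a function φ : ℂ → ℂ that is analytic and injective on the set {z : |z| > R}, such that |f(z)| > R whenever |z| > R, φ(f(z)) = (φ(z))^q for all z with |z| > R, and φ(z)/z → 1 as |z| → ∞. -/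
open Complex Polynomial Filter Metric Set Finset

private lemma poly_eval_bound (p : Polynomial ℂ) (d : ℕ) (hd : p.natDegree < d + 1)
    (z : ℂ) (hz : 1 ≤ ‖z‖) :
    ‖p.eval z‖ ≤ (∑ i ∈ Finset.range (d + 1), ‖p.coeff i‖) *
      ‖z‖ ^ d := by
  rw [Polynomial.eval_eq_sum_range' hd]
  calc ‖∑ i ∈ Finset.range (d+1), p.coeff i * z ^ i‖
      ≤ ∑ i ∈ Finset.range (d+1), ‖p.coeff i * z ^ i‖ :=
        norm_sum_le _ _
    _ ≤ ∑ i ∈ Finset.range (d+1), ‖p.coeff i‖ * ‖z‖ ^ d := by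
        apply Finset.sum_le_sum
        intro i hi
        rw [norm_mul, norm_pow]
        gcongr
        · exact Nat.lt_succ_iff.mp (Finset.mem_range.mp hi)
    _ = _ := by rw [Finset.sum_mul]

set_option maxHeartbeats 1600000 in
/-- Böttcher's theorem near infinity: a monic polynomial of degree `q ≥ 2` is
holomorphically conjugate to `z ↦ z^q` near infinity, by a map tangent to the
identity at infinity. -/
theorem stmt_4 (q : ℕ) (hq : 2 ≤ q) (f : Polynomial ℂ)
    (hmonic : f.Monic) (hdeg : f.natDegree = q) :
    ∃ R : ℝ, 0 < R ∧ ∃ φ : ℂ → ℂ,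
      AnalyticOnNhd ℂ φ {z : ℂ | R < ‖z‖} ∧
      Set.InjOn φ {z : ℂ | R < ‖z‖} ∧
      (∀ z : ℂ, R < ‖z‖ → R < ‖f.eval z‖) ∧
      (∀ z : ℂ, R < ‖z‖ → φ (f.eval z) = (φ z) ^ q) ∧
      Filter.Tendsto (fun z : ℂ => φ z / z)
        (Filter.comap (fun z : ℂ => ‖z‖) Filter.atTop) (nhds 1) := by
  have hfne : f ≠ 0 := hmonic.ne_zero
  have hq0 : (q : ℂ) ≠ 0 := Nat.cast_ne_zero.mpr (by omega)
  -- the perturbation polynomial g = f - X^q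
  set g : Polynomial ℂ := f - Polynomial.X ^ q with hgdef
  have hgeval : ∀ z : ℂ, g.eval z = f.eval z - z ^ q := by
    intro z; simp [hgdef]
  have hgdeg : g.natDegree < q := by
    have hdegf : f.degree = (q : ℕ) := by rw [Polynomial.degree_eq_natDegree hfne, hdeg]
    have h1 : (f - Polynomial.X ^ q).degree < f.degree := by
      refine Polynomial.degree_sub_lt ?_ hfne ?_
      · rw [hdegf, Polynomial.degree_X_pow]
      · rw [hmonic.leadingCoeff, (Polynomial.monic_X_pow q).leadingCoeff]
    rw [hdegf] at h1
    rcases eq_or_ne (f - Polynomial.X ^ q) 0 with h0 | h0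
    · rw [hgdef, h0]; simpa using (by omega : 0 < q)
    · exact (Polynomial.natDegree_lt_iff_degree_lt h0).mpr h1
  -- the constant C
  set C : ℝ := 1 + ∑ i ∈ Finset.range q, ‖g.coeff i‖ with hCdef
  have hC1 : 1 ≤ C := by
    have : (0:ℝ) ≤ ∑ i ∈ Finset.range q, ‖g.coeff i‖ :=
      Finset.sum_nonneg fun i _ => norm_nonneg _
    simp only [hCdef]; linarith
  have hC0 : (0:ℝ) < C := lt_of_lt_of_le one_pos hC1
  -- bound on g
  have hgbound : ∀ z : ℂ, 1 ≤ ‖z‖ →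
      ‖g.eval z‖ ≤ C * ‖z‖ ^ (q - 1) := by
    intro z hz
    have h1 : q - 1 + 1 = q := Nat.sub_add_cancel (by omega)
    have h2 := poly_eval_bound g (q - 1) (by omega) z hz
    rw [h1] at h2
    refine h2.trans ?_
    have h3 : (0:ℝ) ≤ ‖z‖ ^ (q-1) := by positivity
    nlinarith [h3]
  set R₀ : ℝ := 8 * C with hR₀def
  have hR₀8 : 8 ≤ R₀ := by simp only [hR₀def]; linarith
  set S : Set ℂ := {z : ℂ | R₀ < ‖z‖} with hSdef
  have hSopen : IsOpen S := isOpen_lt continuous_const continuous_norm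
  -- basic facts on S
  have hz1 : ∀ z ∈ S, 1 ≤ ‖z‖ := fun z hz => by
    have : R₀ < ‖z‖ := hz; linarith
  have hz0 : ∀ z ∈ S, z ≠ 0 := by
    intro z hz h0
    have := hz1 z hz; rw [h0] at this; simp at this; linarith
  have hzq : ∀ z ∈ S, z ^ q ≠ 0 := fun z hz => pow_ne_zero _ (hz0 z hz)
  -- the key smallness bound
  have hsmall : ∀ z ∈ S, ‖f.eval z / z ^ q - 1‖ ≤ C / ‖z‖ := by
    intro z hz
    have hzq' := hzq z hz
    have h1 : f.eval z / z ^ q - 1 = g.eval z / z ^ q := by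
      rw [hgeval]; field_simp
    rw [h1, norm_div, norm_pow]
    have h2 := hgbound z (hz1 z hz)
    have hza : (0:ℝ) < ‖z‖ := by linarith [hz1 z hz]
    have h3 : ‖z‖ ^ q = ‖z‖ ^ (q-1) * ‖z‖ := by
      rw [← pow_succ, Nat.sub_add_cancel (by omega)]
    rw [h3, div_le_div_iff₀ (by positivity) hza]
    calc ‖g.eval z‖ * ‖z‖
        ≤ (C * ‖z‖ ^ (q-1)) * ‖z‖ := by
          have := hz1 z hz; nlinarith
      _ = C * (‖z‖ ^ (q-1) * ‖z‖) := by ring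
  have hsmall8 : ∀ z ∈ S, C / ‖z‖ < 1/8 := by
    intro z hz
    have hzR : R₀ < ‖z‖ := hz
    rw [div_lt_iff₀ (by linarith [hz1 z hz] : (0:ℝ) < ‖z‖)]
    simp only [hR₀def] at hzR; nlinarith
  -- growth bound
  have hgrow : ∀ z ∈ S, 7 * ‖z‖ ≤ ‖f.eval z‖ := by
    intro z hz
    have h1 := (hsmall z hz).trans_lt (hsmall8 z hz)
    have hzq' := hzq z hz
    have h2 : 7/8 ≤ ‖f.eval z / z ^ q‖ := by
      have hn : ‖(1:ℂ)‖ - ‖f.eval z / z ^ q‖ ≤ ‖(1:ℂ) - f.eval z / z ^ q‖ := norm_sub_norm_le _ _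
      rw [norm_sub_rev] at hn
      simp only [norm_one] at hn
      linarith
    have hza : (0:ℝ) < ‖z‖ := by linarith [hz1 z hz]
    have h3 : ‖z‖ ^ 2 ≤ ‖z‖ ^ q := pow_le_pow_right₀ (hz1 z hz) hq
    have h4 : ‖f.eval z‖ = ‖f.eval z / z ^ q‖ * ‖z‖ ^ q := by
      rw [← norm_pow, ← norm_mul]
      congr 1
      field_simp
    rw [h4]
    have hzR : R₀ < ‖z‖ := hz
    have h5 : 8 * ‖z‖ ≤ ‖z‖ ^ 2 := by nlinarith
    nlinarith [pow_nonneg (le_of_lt hza) q]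
  have hmapsto : ∀ z ∈ S, f.eval z ∈ S ∧ ‖z‖ ≤ ‖f.eval z‖ := by
    intro z hz
    have h1 := hgrow z hz
    have h2 := hz1 z hz
    have hzR : R₀ < ‖z‖ := hz
    constructor
    · show R₀ < ‖f.eval z‖; nlinarith
    · nlinarith
  -- the logarithm
  set L : ℂ → ℂ := fun z => Complex.log (f.eval z / z ^ q) with hLdef
  have hfS : ∀ z ∈ S, f.eval z ∈ S := fun z hz => (hmapsto z hz).1
  -- differentiability of L on S
  have hLdiff : ∀ z ∈ S, DifferentiableAt ℂ L z := by
    intro z hz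
    have hzq' := hzq z hz
    have hd : DifferentiableAt ℂ (fun w => f.eval w / w ^ q) z :=
      (f.differentiable.differentiableAt).div ((differentiable_pow q).differentiableAt) hzq'
    refine hd.clog ?_
    have h1 : f.eval z / z ^ q = 1 + (f.eval z / z ^ q - 1) := by ring
    rw [h1]
    refine Complex.mem_slitPlane_of_norm_lt_one ?_
    exact lt_of_le_of_lt (hsmall z hz) (lt_trans (hsmall8 z hz) (by norm_num))
  -- bound on L
  have hLbound : ∀ z ∈ S, ‖L z‖ ≤ 2 * C / ‖z‖ := by
    intro z hz
    have h1 : f.eval z / z ^ q = 1 + (f.eval z / z ^ q - 1) := by ring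
    have h2 : ‖f.eval z / z ^ q - 1‖ ≤ 1/2 := by
      linarith [hsmall z hz, hsmall8 z hz]
    have h3 := Complex.norm_log_one_add_half_le_self h2
    simp only [hLdef]
    rw [h1]
    refine h3.trans ?_
    have h4 := hsmall z hz
    have hza : (0:ℝ) < ‖z‖ := by linarith [hz1 z hz]
    have h5 : (3/2:ℝ) * ‖f.eval z / z ^ q - 1‖ ≤ (3/2) * (C / ‖z‖) := by
      linarith
    refine h5.trans ?_
    rw [mul_div_assoc]
    have h6 : 0 ≤ C / ‖z‖ := div_nonneg hC0.le hza.le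
    linarith
  have hLquarter : ∀ z ∈ S, 2 * C / ‖z‖ ≤ 1/4 := by
    intro z hz
    have hzR : R₀ < ‖z‖ := hz
    have hza : (0:ℝ) < ‖z‖ := by linarith [hz1 z hz]
    rw [div_le_iff₀ hza]
    simp only [hR₀def] at hzR
    nlinarith
  -- iterates
  set F : ℂ → ℂ := fun z => f.eval z with hFdef
  have hiter : ∀ z ∈ S, ∀ n : ℕ, F^[n] z ∈ S ∧ ‖z‖ ≤ ‖F^[n] z‖ := by
    intro z hz n
    induction n with
    | zero => simpa using hz
    | succ n ih =>
      rw [Function.iterate_succ_apply']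
      obtain ⟨h1, h2⟩ := ih
      obtain ⟨h3, h4⟩ := hmapsto _ h1
      exact ⟨h3, le_trans h2 h4⟩
  have hFdiff : ∀ n : ℕ, Differentiable ℂ (F^[n]) := fun n =>
    f.differentiable.iterate n
  -- the series terms
  set T : ℕ → ℂ → ℂ := fun n z => ((q:ℂ) ^ (n+1))⁻¹ * L (F^[n] z) with hTdef
  have hTbound : ∀ (n : ℕ) (z : ℂ), z ∈ S → ‖T n z‖ ≤ (1/2)^(n+1) * (2 * C / ‖z‖) := by
    intro n z hz
    obtain ⟨h1, h2⟩ := hiter z hz n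
    have hza : (0:ℝ) < ‖z‖ := by linarith [hz1 z hz]
    have hfa : (0:ℝ) < ‖F^[n] z‖ := by linarith [hz1 _ h1]
    have hL1 : ‖L (F^[n] z)‖ ≤ 2 * C / ‖z‖ := by
      refine (hLbound _ h1).trans ?_
      exact div_le_div_of_nonneg_left (by linarith) hza h2
    simp only [hTdef, norm_mul, norm_inv, norm_pow, Complex.norm_natCast]
    have hqpow : ((2:ℝ))^(n+1) ≤ (q:ℝ)^(n+1) := by
      apply pow_le_pow_left₀ (by norm_num)
      exact_mod_cast hq
    have h5 : ((q:ℝ)^(n+1))⁻¹ ≤ (1/2)^(n+1) := by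
      have h6 : ((2:ℝ))^(n+1) ≤ (q:ℝ)^(n+1) :=
        pow_le_pow_left₀ (by norm_num) (by exact_mod_cast hq) _
      rw [show ((1:ℝ)/2) = (2:ℝ)⁻¹ by norm_num, inv_pow]
      exact inv_anti₀ (by positivity) h6
    exact mul_le_mul h5 hL1 (norm_nonneg _) (by positivity)
  -- summability
  have husum : Summable (fun n : ℕ => ((1:ℝ)/2)^(n+1)) := by
    have h := summable_geometric_two.mul_right ((1:ℝ)/2)
    refine h.congr fun n => ?_
    rw [pow_succ]
  have hTbound1 : ∀ (n : ℕ) (z : ℂ), z ∈ S → ‖T n z‖ ≤ (1/2)^(n+1) := by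
    intro n z hz
    refine (hTbound n z hz).trans ?_
    have h1 := hLquarter z hz
    have h2 : (0:ℝ) ≤ 2 * C / ‖z‖ := by
      have hza : (0:ℝ) < ‖z‖ := by linarith [hz1 z hz]
      positivity
    nlinarith [pow_pos (by norm_num : (0:ℝ) < 1/2) (n+1)]
  have hTdiff : ∀ n : ℕ, DifferentiableOn ℂ (T n) S := by
    intro n z hz
    have h1 : DifferentiableAt ℂ (T n) z := by
      have h2 : DifferentiableAt ℂ (fun w => L (F^[n] w)) z :=
        (hLdiff _ (hiter z hz n).1).comp z ((hFdiff n).differentiableAt)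
      exact h2.const_mul _
    exact h1.differentiableWithinAt
  have hsummable : ∀ z ∈ S, Summable (fun n => T n z) := by
    intro z hz
    exact Summable.of_norm_bounded husum (fun n => hTbound1 n z hz)
  -- the function h
  set h : ℂ → ℂ := fun z => ∑' n : ℕ, T n z with hhdef
  have hhdiff : DifferentiableOn ℂ h S :=
    differentiableOn_tsum_of_summable_norm husum hTdiff hSopen
      (fun n w hw => hTbound1 n w hw)
  have hhbound : ∀ z ∈ S, ‖h z‖ ≤ 2 * C / ‖z‖ := by
    intro z hz
    have hza : (0:ℝ) < ‖z‖ := by linarith [hz1 z hz]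
    have h1 : HasSum (fun n : ℕ => (2 * C / ‖z‖) / 2 / 2 ^ n)
        (2 * C / ‖z‖) := hasSum_geometric_two' _
    refine tsum_of_norm_bounded h1 (fun n => ?_)
    refine (hTbound n z hz).trans_eq ?_
    rw [div_div, ← pow_succ']
    rw [div_pow, one_pow]
    ring
  have hhquarter : ∀ z ∈ S, ‖h z‖ ≤ 1/4 :=
    fun z hz => (hhbound z hz).trans (hLquarter z hz)
  -- functional equation for h
  have hfeq : ∀ z ∈ S, (q:ℂ) * h z = L z + h (f.eval z) := by
    intro z hz
    have hsz := hsummable z hz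
    have h1 : (q:ℂ) * h z = ∑' n : ℕ, (q:ℂ) * T n z := (tsum_mul_left).symm
    rw [h1, Summable.tsum_eq_zero_add (hsz.mul_left _)]
    congr 1
    · show (q:ℂ) * (((q:ℂ) ^ (0+1))⁻¹ * L (F^[0] z)) = L z
      simp [hq0]
    · show ∑' n : ℕ, (q:ℂ) * (((q:ℂ) ^ (n+1+1))⁻¹ * L (F^[n+1] z)) = h (f.eval z)
      simp only [hhdef]
      apply tsum_congr
      intro n
      show (q:ℂ) * (((q:ℂ) ^ (n+2))⁻¹ * L (F^[n+1] z)) = ((q:ℂ) ^ (n+1))⁻¹ * L (F^[n] (F z))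
      rw [← Function.iterate_succ_apply]
      have h2 : ((q:ℂ) ^ (n+2))⁻¹ = ((q:ℂ))⁻¹ * ((q:ℂ) ^ (n+1))⁻¹ := by
        rw [← mul_inv, ← pow_succ']
      rw [h2]
      field_simp
  -- the Böttcher map
  set φ : ℂ → ℂ := fun z => z * Complex.exp (h z) with hφdef
  have hφdiff : DifferentiableOn ℂ φ S :=
    (differentiableOn_id).mul hhdiff.cexp
  -- the functional equation for φ
  have hφeq : ∀ z ∈ S, φ (f.eval z) = (φ z) ^ q := by
    intro z hz
    have hzq' := hzq z hz
    have hfz0 : f.eval z ≠ 0 := by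
      intro h0
      have := hgrow z hz
      rw [h0] at this
      simp at this
      nlinarith [hz1 z hz]
    have h1 : (φ z) ^ q = z ^ q * Complex.exp ((q:ℂ) * h z) := by
      simp only [hφdef]
      rw [mul_pow, ← Complex.exp_nat_mul]
    rw [h1, hfeq z hz, Complex.exp_add, Complex.exp_log (div_ne_zero hfz0 hzq')]
    simp only [hφdef]
    field_simp
  -- the deviation ψ
  set ψ : ℂ → ℂ := fun z => φ z - z with hψdef
  have hψdiff : DifferentiableOn ℂ ψ S := hφdiff.sub differentiableOn_id
  have hψbound : ∀ z ∈ S, ‖ψ z‖ ≤ 4 * C := by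
    intro z hz
    have hza : (0:ℝ) < ‖z‖ := by linarith [hz1 z hz]
    have h1 : ψ z = z * (Complex.exp (h z) - 1) := by simp only [hψdef, hφdef]; ring
    rw [h1, norm_mul]
    have h2 : ‖Complex.exp (h z) - 1‖ ≤ 2 * ‖h z‖ :=
      Complex.norm_exp_sub_one_le ((hhquarter z hz).trans (by norm_num))
    have h3 := hhbound z hz
    calc ‖z‖ * ‖Complex.exp (h z) - 1‖
        ≤ ‖z‖ * (2 * (2 * C / ‖z‖)) := by
          nlinarith [norm_nonneg (h z)]
      _ = 4 * C := by field_simp; ring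
  -- the final radius
  set R : ℝ := 48 * C + 4 with hRdef
  have hRpos : (0:ℝ) < R := by simp only [hRdef]; linarith
  have hRS : ∀ z : ℂ, R < ‖z‖ → z ∈ S := by
    intro z hzR
    show R₀ < ‖z‖
    simp only [hRdef] at hzR
    simp only [hR₀def]
    linarith
  -- derivative bound for ψ on the outer region
  have hψderiv : ∀ c : ℂ, R / 2 < ‖c‖ → ‖deriv ψ c‖ ≤ 1/2 := by
    intro c hc
    have hcS : c ∈ S := by
      show R₀ < ‖c‖
      simp only [hRdef] at hc
      simp only [hR₀def]
      linarith
    set r : ℝ := ‖c‖ - R₀ with hrdef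
    have hr0 : (0:ℝ) < r := by
      have h0 : R₀ < ‖c‖ := hcS
      simp only [hrdef]; linarith
    have hrge : 16 * C + 2 ≤ r := by
      simp only [hrdef, hR₀def]
      simp only [hRdef] at hc
      linarith
    have hball : Metric.ball c r ⊆ S := by
      intro w hw
      rw [Metric.mem_ball, Complex.dist_eq] at hw
      show R₀ < ‖w‖
      have h1 : ‖w‖ + ‖c - w‖ ≥ ‖c‖ := by
        have := norm_add_le w (c - w)
        simp only [add_sub_cancel] at this
        linarith
      have h2 : ‖c - w‖ = ‖w - c‖ := norm_sub_rev c w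
      simp only [hrdef] at hw ⊢
      linarith [h2 ▸ h1]
    have hmaps : Set.MapsTo ψ (Metric.ball c r) (Metric.ball (ψ c) (8 * C + 1)) := by
      intro w hw
      rw [Metric.mem_ball, Complex.dist_eq]
      have h1 := hψbound w (hball hw)
      have h2 := hψbound c hcS
      calc ‖ψ w - ψ c‖ ≤ ‖ψ w‖ + ‖ψ c‖ := by
            exact norm_sub_le (ψ w) (ψ c)
        _ ≤ 8 * C := by linarith
        _ < 8 * C + 1 := by linarith
    have hd := Complex.norm_deriv_le_div_of_mapsTo_ball (hψdiff.mono hball) (hmaps.mono_right Metric.ball_subset_closedBall) hr0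
    refine hd.trans ?_
    rw [div_le_iff₀ hr0]
    nlinarith
  -- injectivity
  have hinj : Set.InjOn φ {z : ℂ | R < ‖z‖} := by
    intro z₁ hz₁ z₂ hz₂ heqφ
    have hz₁' : R < ‖z₁‖ := hz₁
    have hz₂' : R < ‖z₂‖ := hz₂
    have hz₁S := hRS z₁ hz₁'
    have hz₂S := hRS z₂ hz₂'
    rcases le_or_gt (‖z₁ - z₂‖) (‖z₁‖ / 2) with hcase | hcase
    · -- close case : mean value inequality on the segment
      have hseg : ∀ x ∈ segment ℝ z₁ z₂, R / 2 < ‖x‖ := by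
        intro x hx
        obtain ⟨a, b, ha, hb, hab, hxeq⟩ := hx
        have h1 : x - z₁ = b • (z₂ - z₁) := by
          rw [← hxeq]
          have : a = 1 - b := by linarith
          rw [this]
          module
        have h2 : ‖x - z₁‖ ≤ ‖z₁ - z₂‖ := by
          rw [h1]
          have hb1 : b ≤ 1 := by linarith
          have he : ‖b • (z₂ - z₁)‖ = b * ‖z₂ - z₁‖ := by
            rw [norm_smul,
              Real.norm_eq_abs, _root_.abs_of_nonneg hb]
          rw [he, norm_sub_rev z₂ z₁]
          nlinarith [norm_nonneg (z₁ - z₂)]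
        have h3 : ‖z₁‖ - ‖x - z₁‖ ≤ ‖x‖ := by
          have h5 := norm_add_le x (z₁ - x)
          have h0 : x + (z₁ - x) = z₁ := by ring
          rw [h0] at h5
          have h6 := norm_sub_rev z₁ x
          linarith
        linarith
      have hsub : ∀ x ∈ segment ℝ z₁ z₂, DifferentiableAt ℂ ψ x := by
        intro x hx
        have hxS : x ∈ S := by
          have h0 := hseg x hx
          show R₀ < ‖x‖
          simp only [hRdef] at h0
          simp only [hR₀def]
          linarith
        exact hψdiff.differentiableAt (hSopen.mem_nhds hxS)
      have hbd : ∀ x ∈ segment ℝ z₁ z₂, ‖deriv ψ x‖ ≤ 1/2 :=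
        fun x hx => hψderiv x (hseg x hx)
      have hmvt := (convex_segment z₁ z₂).norm_image_sub_le_of_norm_deriv_le hsub hbd
        (left_mem_segment ℝ z₁ z₂) (right_mem_segment ℝ z₁ z₂)
      have h2 : ψ z₂ - ψ z₁ = -(z₂ - z₁) := by
        simp only [hψdef]
        linear_combination (-1 : ℂ) * heqφ
      rw [h2, norm_neg] at hmvt
      have h3 : ‖z₂ - z₁‖ = 0 := by linarith [norm_nonneg (z₂ - z₁)]
      exact (sub_eq_zero.mp (norm_eq_zero.mp h3)).symm
    · -- far case
      exfalso
      have h1 : ‖φ z₁ - φ z₂‖ = 0 := by rw [heqφ]; simp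
      have h2 : φ z₁ - φ z₂ = (z₁ - z₂) + (ψ z₁ - ψ z₂) := by simp only [hψdef]; ring
      have h3 : ‖z₁ - z₂‖ ≤ ‖ψ z₁ - ψ z₂‖ := by
        have h4 : ‖φ z₁ - φ z₂‖ = ‖(z₁ - z₂) + (ψ z₁ - ψ z₂)‖ := by rw [h2]
        rw [h1] at h4
        have h5 : ‖(z₁ - z₂) + (ψ z₁ - ψ z₂)‖ = 0 := h4.symm
        have h6 : z₁ - z₂ = -(ψ z₁ - ψ z₂) := by
          have := norm_eq_zero.mp h5
          linear_combination this
        rw [h6, norm_neg]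
      have h7 : ‖ψ z₁ - ψ z₂‖ ≤ 8 * C := by
        have h8 : ‖ψ z₁ - ψ z₂‖ ≤ ‖ψ z₁‖ + ‖ψ z₂‖ := by
          exact norm_sub_le (ψ z₁) (ψ z₂)
        linarith [hψbound z₁ hz₁S, hψbound z₂ hz₂S]
      simp only [hRdef] at hz₁'
      linarith
  -- final assembly
  have hS'open : IsOpen {z : ℂ | R < ‖z‖} :=
    isOpen_lt continuous_const continuous_norm
  refine ⟨R, hRpos, φ, ?_, hinj, ?_, ?_, ?_⟩
  · exact (hφdiff.mono fun z hz => hRS z hz).analyticOnNhd hS'open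
  · intro z hz
    have hzS := hRS z hz
    linarith [hgrow z hzS, hz1 z hzS, hz]
  · exact fun z hz => hφeq z (hRS z hz)
  · have habs : Filter.Tendsto (fun z : ℂ => ‖z‖)
        (Filter.comap (fun z : ℂ => ‖z‖) Filter.atTop) Filter.atTop :=
      Filter.tendsto_comap
    have hev : ∀ᶠ z : ℂ in Filter.comap (fun z : ℂ => ‖z‖) Filter.atTop, z ∈ S := by
      have := habs.eventually (Filter.eventually_gt_atTop R₀)
      exact this.mono fun z hz => hz
    have hh0 : Filter.Tendsto h
        (Filter.comap (fun z : ℂ => ‖z‖) Filter.atTop) (nhds 0) := by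
      apply squeeze_zero_norm'
      · exact hev.mono fun z hz => by
          exact hhbound z hz
      · exact tendsto_const_nhds.div_atTop habs
    have hexp : Filter.Tendsto (fun z : ℂ => Complex.exp (h z))
        (Filter.comap (fun z : ℂ => ‖z‖) Filter.atTop) (nhds 1) := by
      have := (Complex.continuous_exp.tendsto 0).comp hh0
      simpa [Function.comp_def] using this
    refine hexp.congr' ?_
    refine hev.mono fun z hz => ?_
    show Complex.exp (h z) = φ z / z
    simp only [hφdef]
    rw [mul_comm, mul_div_assoc, div_self (hz0 z hz), mul_one]
end

section
/- (Uniqueness of the normalized Böttcher coordinate.) Let f be a monic complex polynomial of degree q ≥ 2 and let R > 0 be such that |f(z)| > R whenever |z| > R. Suppose φ₁ and φ₂ are both analytic on {z : |z| > R}, satisfy φᵢ(f(z)) = (φᵢ(z))^q for all |z| > R, and satisfy φᵢ(z)/z → 1 as |z| → ∞. Then there exists R' ≥ R such that φ₁(z) = φ₂(z) for all z with |z| > R'. -/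
open Filter Metric
noncomputable def Complex.abs : AbsoluteValue ℂ ℝ := NormedField.toAbsoluteValue ℂ
lemma Complex.norm_eq_abs (z : ℂ) : ‖z‖ = Complex.abs z := rfl
lemma Complex.abs_ofReal (r : ℝ) : Complex.abs (r : ℂ) = |r| := Complex.norm_real r
lemma Complex.continuous_abs : Continuous Complex.abs := continuous_norm
lemma aux_pow (q : ℕ) (hq : 2 ≤ q) (r : ℝ) (h : ∀ n : ℕ, r ^ (q ^ n) ≤ 4) : r ≤ 1 := by
  by_contra hc
  push_neg at hc
  obtain ⟨n, hn⟩ := ((tendsto_pow_atTop_atTop_of_one_lt hc).eventually_gt_atTop 4).exists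
  have h1 : r ^ n ≤ r ^ (q ^ n) :=
    pow_le_pow_right₀ hc.le (Nat.lt_pow_self (n := n) (by omega : 1 < q)).le
  linarith [h n]

lemma aux_conn (r : ℝ) (hr : 0 ≤ r) : IsPreconnected {z : ℂ | r < Complex.abs z} := by
  have hrank : 1 < Module.rank ℝ ℂ := by
    rw [Complex.rank_real_complex]; norm_num
  have hb : ((r + 1 : ℝ) : ℂ) ∈ {z : ℂ | r < Complex.abs z} := by
    simp only [Set.mem_setOf_eq, Complex.abs_ofReal]
    rw [abs_of_nonneg (by linarith)]; linarith
  refine (IsPathConnected.isConnected ?_).isPreconnected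
  refine ⟨((r + 1 : ℝ) : ℂ), hb, ?_⟩
  intro y hy
  simp only [Set.mem_setOf_eq] at hy
  set b : ℂ := ((r + 1 : ℝ) : ℂ) with hbdef
  have hnb : ‖b‖ = r + 1 := by
    rw [Complex.norm_real, Real.norm_eq_abs, abs_of_nonneg (by linarith)]
  set c : ℝ := Complex.abs y / (r + 1) with hcdef
  have hc0 : 0 < c := div_pos (lt_of_le_of_lt hr hy) (by linarith)
  have hcb : ‖c • b‖ = Complex.abs y := by
    rw [norm_smul, Real.norm_eq_abs, abs_of_pos hc0, hnb, hcdef,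
      div_mul_cancel₀ _ (by linarith : (r:ℝ) + 1 ≠ 0)]
  -- join b to c • b via the segment
  have hseg : segment ℝ b (c • b) ⊆ {z : ℂ | r < Complex.abs z} := by
    intro z hz
    rw [segment_eq_image] at hz
    obtain ⟨t, ht, rfl⟩ := hz
    simp only [Set.mem_Icc] at ht
    have : (1 - t) • b + t • (c • b) = ((1 - t) + t * c) • b := by
      rw [smul_smul, add_smul]
    show r < Complex.abs ((1 - t) • b + t • (c • b))
    rw [this, ← Complex.norm_eq_abs, norm_smul, Real.norm_eq_abs, hnb]
    have hmin : min 1 c ≤ (1 - t) + t * c := by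
      rcases le_total 1 c with h | h
      · calc min 1 c ≤ 1 := min_le_left _ _
          _ ≤ (1 - t) + t * c := by nlinarith
      · calc min 1 c ≤ c := min_le_right _ _
          _ ≤ (1 - t) + t * c := by nlinarith
    have hminpos : 0 < min 1 c := lt_min one_pos hc0
    have h1 : r < min 1 c * (r + 1) := by
      rcases le_total 1 c with h | h
      · have : min 1 c = 1 := min_eq_left h
        rw [this]; linarith
      · have : min 1 c = c := min_eq_right h
        rw [this, hcdef]
        rw [div_mul_cancel₀ _ (by linarith : (r:ℝ) + 1 ≠ 0)]
        exact hy
    calc r < min 1 c * (r + 1) := h1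
      _ ≤ |(1 - t) + t * c| * (r + 1) := by
          apply mul_le_mul_of_nonneg_right _ (by linarith)
          rw [abs_of_nonneg (le_trans hminpos.le hmin)] at *
          exact hmin
  have hj1 : JoinedIn {z : ℂ | r < Complex.abs z} b (c • b) := by
    have hconv := (convex_segment b (c • b)).isPathConnected
      ⟨b, left_mem_segment ℝ b (c • b)⟩
    exact (hconv.joinedIn b (left_mem_segment ℝ b _) (c • b)
      (right_mem_segment ℝ b _)).mono hseg
  have hj2 : JoinedIn {z : ℂ | r < Complex.abs z} (c • b) y := by
    have hsph := isPathConnected_sphere hrank (0 : ℂ) (le_trans hr hy.le : (0:ℝ) ≤ Complex.abs y)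
    have h1 : c • b ∈ sphere (0 : ℂ) (Complex.abs y) := by
      rw [mem_sphere_zero_iff_norm, hcb]
    have h2 : y ∈ sphere (0 : ℂ) (Complex.abs y) := by
      rw [mem_sphere_zero_iff_norm, Complex.norm_eq_abs]
    refine (hsph.joinedIn _ h1 _ h2).mono ?_
    intro z hz
    rw [mem_sphere_zero_iff_norm] at hz
    simp only [Set.mem_setOf_eq, ← Complex.norm_eq_abs, hz]
    exact hy
  exact hj1.trans hj2

lemma aux_tan (φ : ℂ → ℂ)
    (ht : Filter.Tendsto (fun z : ℂ => φ z / z)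
      (Filter.comap (fun z : ℂ => Complex.abs z) Filter.atTop) (nhds 1)) :
    ∃ M : ℝ, 1 ≤ M ∧ ∀ z : ℂ, M ≤ Complex.abs z →
      Complex.abs z / 2 ≤ Complex.abs (φ z) ∧ Complex.abs (φ z) ≤ 2 * Complex.abs z := by
  have e1 : ∀ᶠ z in Filter.comap (fun z : ℂ => Complex.abs z) Filter.atTop,
      dist (φ z / z) 1 < 1/2 := ht (Metric.ball_mem_nhds _ (by norm_num))
  rw [Filter.eventually_comap] at e1
  rw [Filter.eventually_atTop] at e1
  obtain ⟨M, hM⟩ := e1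
  refine ⟨max M 1, le_max_right _ _, ?_⟩
  intro z hz
  have hz1 : (1:ℝ) ≤ Complex.abs z := le_trans (le_max_right M 1) hz
  have hz0 : z ≠ 0 := by
    intro h; rw [h] at hz1; simp at hz1; linarith
  have hd : Complex.abs (φ z / z - 1) < 1/2 := by
    have := hM (Complex.abs z) (le_trans (le_max_left M 1) hz) z rfl
    rwa [Complex.dist_eq] at this
  have habs : Complex.abs (φ z / z) = Complex.abs (φ z) / Complex.abs z := map_div₀ _ _ _
  have hzpos : (0:ℝ) < Complex.abs z := by linarith
  have hub : Complex.abs (φ z / z) ≤ 3/2 := by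
    calc Complex.abs (φ z / z) = Complex.abs ((φ z / z - 1) + 1) := by ring_nf
      _ ≤ Complex.abs (φ z / z - 1) + Complex.abs 1 := Complex.abs.add_le _ _
      _ ≤ 3/2 := by simp; linarith
  have hlb : (1:ℝ)/2 ≤ Complex.abs (φ z / z) := by
    have h1 : Complex.abs 1 ≤ Complex.abs (1 - φ z / z) + Complex.abs (φ z / z) := by
      calc Complex.abs 1 = Complex.abs ((1 - φ z / z) + φ z / z) := by ring_nf
        _ ≤ _ := Complex.abs.add_le _ _
    have h2 : Complex.abs (1 - φ z / z) = Complex.abs (φ z / z - 1) := by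
      rw [← Complex.abs.map_neg]; ring_nf
    simp at h1; rw [h2] at h1; linarith
  rw [habs] at hub hlb
  rw [le_div_iff₀ hzpos] at hlb
  rw [div_le_iff₀ hzpos] at hub
  constructor <;> linarith

lemma aux_growth (q : ℕ) (hq : 2 ≤ q) (f : Polynomial ℂ)
    (hmonic : f.Monic) (hdeg : f.natDegree = q) :
    ∃ C : ℝ, 0 ≤ C ∧ ∀ z : ℂ, max 1 (C + 2) ≤ Complex.abs z →
      2 * Complex.abs z ≤ Complex.abs (f.eval z) := by
  classical
  set p := f - Polynomial.X ^ q with hp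
  have hdegp : p.natDegree < q := by
    by_cases h0 : p = 0
    · rw [h0]; simp; omega
    · rw [Polynomial.natDegree_lt_iff_degree_lt h0]
      have hd1 : f.degree = (q : ℕ) := by
        rw [Polynomial.degree_eq_natDegree hmonic.ne_zero, hdeg]
      have hdd : f.degree = (Polynomial.X ^ q : Polynomial ℂ).degree := by
        rw [hd1, Polynomial.degree_X_pow]
      have hlc : f.leadingCoeff = (Polynomial.X ^ q : Polynomial ℂ).leadingCoeff := by
        rw [hmonic.leadingCoeff, Polynomial.leadingCoeff_X_pow]
      have := Polynomial.degree_sub_lt hdd hmonic.ne_zero hlc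
      rw [hd1] at this
      exact this
  set C : ℝ := ∑ i ∈ Finset.range q, Complex.abs (p.coeff i) with hC
  have hC0 : 0 ≤ C := Finset.sum_nonneg fun i _ => AbsoluteValue.nonneg _ _
  refine ⟨C, hC0, ?_⟩
  intro z hz
  have hz1 : (1:ℝ) ≤ Complex.abs z := le_trans (le_max_left _ _) hz
  have hzC : C + 2 ≤ Complex.abs z := le_trans (le_max_right _ _) hz
  set a := Complex.abs z with ha
  have hpz : Complex.abs (p.eval z) ≤ C * a ^ (q - 1) := by
    rw [Polynomial.eval_eq_sum_range' hdegp]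
    calc Complex.abs (∑ i ∈ Finset.range q, p.coeff i * z ^ i)
        ≤ ∑ i ∈ Finset.range q, Complex.abs (p.coeff i * z ^ i) :=
          AbsoluteValue.sum_le _ _ _
      _ ≤ ∑ i ∈ Finset.range q, Complex.abs (p.coeff i) * a ^ (q - 1) := by
          apply Finset.sum_le_sum
          intro i hi
          rw [map_mul, map_pow]
          apply mul_le_mul_of_nonneg_left _ (AbsoluteValue.nonneg _ _)
          exact pow_le_pow_right₀ hz1 (by
            have := Finset.mem_range.mp hi; omega)
      _ = C * a ^ (q - 1) := by rw [← Finset.sum_mul]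
  have hfz : a ^ q - C * a ^ (q - 1) ≤ Complex.abs (f.eval z) := by
    have hfe : f.eval z = p.eval z + z ^ q := by
      rw [hp]; simp [Polynomial.eval_sub, Polynomial.eval_pow]
    rw [hfe]
    have h1 : Complex.abs (z ^ q) - Complex.abs (p.eval z)
        ≤ Complex.abs (p.eval z + z ^ q) := by
      have := Complex.abs.add_le (p.eval z + z ^ q) (-(p.eval z))
      simp at this
      rw [map_pow]
      linarith
    rw [map_pow] at h1
    linarith
  have hpow : a ^ (q - 1) * a = a ^ q := by
    rw [← pow_succ]
    congr 1
    omega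
  have hge : a ≤ a ^ (q - 1) := by
    calc a = a ^ 1 := (pow_one a).symm
      _ ≤ a ^ (q - 1) := pow_le_pow_right₀ hz1 (by omega)
  have hCa : 2 * a ≤ a ^ (q - 1) * (a - C) := by
    have h2 : 2 ≤ a - C := by linarith
    calc 2 * a ≤ a ^ (q - 1) * 2 := by nlinarith
      _ ≤ a ^ (q - 1) * (a - C) := by nlinarith [pow_nonneg (by linarith : (0:ℝ) ≤ a) (q-1)]
  calc 2 * a ≤ a ^ (q - 1) * (a - C) := hCa
    _ = a ^ q - C * a ^ (q - 1) := by rw [mul_sub, hpow]; ring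
    _ ≤ Complex.abs (f.eval z) := hfz

/-- Uniqueness of the normalized Böttcher coordinate: two analytic solutions of the
Böttcher functional equation tangent to the identity at infinity agree near infinity. -/
theorem stmt_5 (q : ℕ) (hq : 2 ≤ q) (f : Polynomial ℂ)
    (hmonic : f.Monic) (hdeg : f.natDegree = q)
    (R : ℝ) (hR : 0 < R) (hfR : ∀ z : ℂ, R < ‖z‖ → R < ‖f.eval z‖)
    (φ₁ φ₂ : ℂ → ℂ)
    (h₁ : AnalyticOnNhd ℂ φ₁ {z : ℂ | R < ‖z‖})
    (h₂ : AnalyticOnNhd ℂ φ₂ {z : ℂ | R < ‖z‖})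
    (hfun₁ : ∀ z : ℂ, R < ‖z‖ → φ₁ (f.eval z) = (φ₁ z) ^ q)
    (hfun₂ : ∀ z : ℂ, R < ‖z‖ → φ₂ (f.eval z) = (φ₂ z) ^ q)
    (htan₁ : Filter.Tendsto (fun z : ℂ => φ₁ z / z)
      (Filter.comap (fun z : ℂ => ‖z‖) Filter.atTop) (nhds 1))
    (htan₂ : Filter.Tendsto (fun z : ℂ => φ₂ z / z)
      (Filter.comap (fun z : ℂ => ‖z‖) Filter.atTop) (nhds 1)) :
    ∃ R' : ℝ, R ≤ R' ∧ ∀ z : ℂ, R' < ‖z‖ → φ₁ z = φ₂ z := by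
  obtain ⟨M₁, hM₁1, hM₁⟩ := aux_tan φ₁ htan₁
  obtain ⟨M₂, hM₂1, hM₂⟩ := aux_tan φ₂ htan₂
  obtain ⟨C, hC0, hCgrow⟩ := aux_growth q hq f hmonic hdeg
  set R' := max (max R (max M₁ M₂)) (max 1 (C + 2)) with hR'def
  have hRR' : R ≤ R' := le_trans (le_max_left _ _) (le_max_left _ _)
  have hM₁R' : M₁ ≤ R' :=
    le_trans (le_trans (le_max_left _ _) (le_max_right R _)) (le_max_left _ _)
  have hM₂R' : M₂ ≤ R' :=
    le_trans (le_trans (le_max_right _ _) (le_max_right R _)) (le_max_left _ _)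
  have h1R' : (1:ℝ) ≤ R' := le_trans (le_max_left 1 _) (le_max_right _ _)
  have hCR' : C + 2 ≤ R' := le_trans (le_max_right 1 _) (le_max_right _ _)
  have hR'pos : 0 < R' := lt_of_lt_of_le hR hRR'
  refine ⟨R', hRR', ?_⟩
  set U := {z : ℂ | R' < Complex.abs z} with hUdef
  have hUsub : U ⊆ {z : ℂ | R < Complex.abs z} := by
    intro z hz; exact lt_of_le_of_lt hRR' hz
  set F : ℂ → ℂ := fun w => f.eval w with hFdef
  -- the orbit stays in U
  have horb : ∀ z : ℂ, R' < Complex.abs z → ∀ n : ℕ, R' < Complex.abs (F^[n] z) := by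
    intro z hz n
    induction n with
    | zero => simpa using hz
    | succ n ih =>
      rw [Function.iterate_succ_apply']
      have hgrow := hCgrow (F^[n] z) (le_trans (max_le h1R' hCR') ih.le)
      calc R' < Complex.abs (F^[n] z) := ih
        _ ≤ 2 * Complex.abs (F^[n] z) := by
            linarith [AbsoluteValue.nonneg Complex.abs (F^[n] z)]
        _ ≤ Complex.abs (f.eval (F^[n] z)) := hgrow
  -- iterated functional equation
  have hiter : ∀ (φ : ℂ → ℂ), (∀ z : ℂ, R < Complex.abs z → φ (f.eval z) = φ z ^ q) →
      ∀ z : ℂ, R' < Complex.abs z → ∀ n : ℕ, φ (F^[n] z) = φ z ^ (q ^ n) := by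
    intro φ hfun z hz n
    induction n with
    | zero => simp
    | succ n ih =>
      rw [Function.iterate_succ_apply']
      show φ (f.eval (F^[n] z)) = φ z ^ q ^ (n + 1)
      rw [hfun _ (lt_of_le_of_lt hRR' (horb z hz n)), ih, ← pow_mul, ← pow_succ]
  -- positivity of the moduli on U
  have hpos : ∀ z : ℂ, R' < Complex.abs z →
      0 < Complex.abs (φ₁ z) ∧ 0 < Complex.abs (φ₂ z) := by
    intro z hz
    have hb1 := (hM₁ z (le_trans hM₁R' hz.le)).1
    have hb2 := (hM₂ z (le_trans hM₂R' hz.le)).1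
    have hzpos : 0 < Complex.abs z := lt_trans hR'pos hz
    constructor <;> linarith
  -- the moduli agree on U
  have habs : ∀ z : ℂ, R' < Complex.abs z →
      Complex.abs (φ₁ z) = Complex.abs (φ₂ z) := by
    intro z hz
    obtain ⟨ha, hb⟩ := hpos z hz
    have key : ∀ (ψ₁ ψ₂ : ℂ → ℂ) (M₁' M₂' : ℝ), M₁' ≤ R' → M₂' ≤ R' →
        (∀ w : ℂ, M₁' ≤ Complex.abs w →
          Complex.abs w / 2 ≤ Complex.abs (ψ₁ w) ∧ Complex.abs (ψ₁ w) ≤ 2 * Complex.abs w) →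
        (∀ w : ℂ, M₂' ≤ Complex.abs w →
          Complex.abs w / 2 ≤ Complex.abs (ψ₂ w) ∧ Complex.abs (ψ₂ w) ≤ 2 * Complex.abs w) →
        (∀ n : ℕ, ψ₁ (F^[n] z) = ψ₁ z ^ (q ^ n)) →
        (∀ n : ℕ, ψ₂ (F^[n] z) = ψ₂ z ^ (q ^ n)) →
        0 < Complex.abs (ψ₂ z) →
        Complex.abs (ψ₁ z) ≤ Complex.abs (ψ₂ z) := by
      intro ψ₁ ψ₂ M₁' M₂' hM₁' hM₂' hb1 hb2 hi1 hi2 hψ₂pos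
      have h4 : ∀ n : ℕ, (Complex.abs (ψ₁ z) / Complex.abs (ψ₂ z)) ^ (q ^ n) ≤ 4 := by
        intro n
        have hw := horb z hz n
        have e1 : Complex.abs (ψ₁ z) ^ (q ^ n) = Complex.abs (ψ₁ (F^[n] z)) := by
          rw [hi1 n, map_pow]
        have e2 : Complex.abs (ψ₂ z) ^ (q ^ n) = Complex.abs (ψ₂ (F^[n] z)) := by
          rw [hi2 n, map_pow]
        have u1 := (hb1 (F^[n] z) (le_trans hM₁' hw.le)).2
        have u2 := (hb2 (F^[n] z) (le_trans hM₂' hw.le)).1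
        rw [div_pow, div_le_iff₀ (pow_pos hψ₂pos _)]
        rw [e1, e2]
        linarith
      have := aux_pow q hq _ h4
      rwa [div_le_one hψ₂pos] at this
    have h12 := key φ₁ φ₂ M₁ M₂ hM₁R' hM₂R' hM₁ hM₂
      (hiter φ₁ hfun₁ z hz) (hiter φ₂ hfun₂ z hz) hb
    have h21 := key φ₂ φ₁ M₂ M₁ hM₂R' hM₁R' hM₂ hM₁
      (hiter φ₂ hfun₂ z hz) (hiter φ₁ hfun₁ z hz) ha
    linarith
  -- nonvanishing of φ₂ on U
  have hne2 : ∀ z ∈ U, φ₂ z ≠ 0 := by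
    intro z hz h0
    have := (hpos z hz).2
    rw [h0] at this; simp at this
  -- the quotient ψ
  set ψ : ℂ → ℂ := fun z => φ₁ z / φ₂ z with hψdef
  have hψnorm : ∀ z ∈ U, Complex.abs (ψ z) = 1 := by
    intro z hz
    show Complex.abs (φ₁ z / φ₂ z) = 1
    rw [map_div₀, habs z hz, div_self (ne_of_gt (hpos z hz).2)]
  have hdiff : DifferentiableOn ℂ ψ U := by
    intro z hz
    exact (((h₁ z (hUsub hz)).div (h₂ z (hUsub hz)) (hne2 z hz)).differentiableAt).differentiableWithinAt
  have hUopen : IsOpen U := isOpen_lt continuous_const Complex.continuous_abs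
  have hUconn := aux_conn R' hR'pos.le
  set b₀ : ℂ := ((R' + 1 : ℝ) : ℂ) with hb₀def
  have hb₀ : b₀ ∈ U := by
    show R' < Complex.abs ((R' + 1 : ℝ) : ℂ)
    rw [Complex.abs_ofReal, abs_of_nonneg (by linarith)]
    linarith
  have hmax : IsMaxOn (norm ∘ ψ) U b₀ := by
    intro x hx
    simp only [Function.comp_apply, Complex.norm_eq_abs, Set.mem_setOf_eq,
      hψnorm x hx, hψnorm b₀ hb₀]
    exact le_refl 1
  have heq := Complex.eqOn_of_isPreconnected_of_isMaxOn_norm hUconn hUopen hdiff hb₀ hmax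
  -- the constant is 1
  have hψb : ψ b₀ = 1 := by
    set s : ℕ → ℂ := fun n => ((R' + 1 + n : ℝ) : ℂ) with hsdef
    have hsabs : ∀ n : ℕ, Complex.abs (s n) = R' + 1 + n := by
      intro n
      rw [hsdef]
      simp only [Complex.abs_ofReal]
      rw [abs_of_nonneg]
      positivity
    have hsU : ∀ n : ℕ, s n ∈ U := by
      intro n
      show R' < Complex.abs (s n)
      rw [hsabs n]
      have : (0:ℝ) ≤ n := Nat.cast_nonneg n
      linarith
    have hcomap : Filter.Tendsto s Filter.atTop
        (Filter.comap (fun z : ℂ => Complex.abs z) Filter.atTop) := by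
      rw [Filter.tendsto_comap_iff]
      have he : (fun z : ℂ => Complex.abs z) ∘ s = fun n : ℕ => R' + 1 + n := by
        funext n; exact hsabs n
      rw [he]
      exact Filter.tendsto_atTop_add_const_left _ _ tendsto_natCast_atTop_atTop
    have ht := (htan₁.div htan₂ one_ne_zero).comp hcomap
    have ht2 : Filter.Tendsto (fun _ : ℕ => ψ b₀) Filter.atTop (nhds ((1:ℂ)/1)) := by
      apply ht.congr
      intro n
      have hs0 : s n ≠ 0 := by
        intro h0
        have h := hsabs n
        rw [h0, map_zero] at h
        have : (0:ℝ) ≤ (n:ℝ) := Nat.cast_nonneg n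
        linarith
      have h2 : φ₂ (s n) ≠ 0 := hne2 (s n) (hsU n)
      have e1 : (φ₁ (s n) / s n) / (φ₂ (s n) / s n) = ψ (s n) := by
        show _ = φ₁ (s n) / φ₂ (s n)
        field_simp
      show (φ₁ (s n) / s n) / (φ₂ (s n) / s n) = ψ b₀
      rw [e1, heq (hsU n)]
      rfl
    have := tendsto_nhds_unique ht2 tendsto_const_nhds
    simpa using this.symm
  -- conclude
  intro z hz
  have h1 : ψ z = 1 := by rw [heq hz, Function.const_apply, hψb]
  have h2 : φ₁ z / φ₂ z = 1 := h1
  exact (div_eq_one_iff_eq (hne2 z hz)).mp h2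
end

section
/- (Uniqueness of the Green's function.) Let f be a monic complex polynomial of degree q ≥ 2. There is at most one continuous function g : ℂ → ℝ such that g vanishes on the filled Julia set K(f), g is strictly positive on ℂ \ K(f), g(f(z)) = q·g(z) for all z ∈ ℂ, and g(z) − log|z| → 0 as |z| → ∞. -/
/-- Uniqueness of the Green's function: there is at most one continuous `g : ℂ → ℝ`
vanishing on the filled Julia set, strictly positive off it, satisfying
`g(f(z)) = q g(z)`, and with `g(z) - log|z| → 0` as `|z| → ∞`. -/
theorem stmt_7 (q : ℕ) (hq : 2 ≤ q) (f : Polynomial ℂ)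
    (hmonic : f.Monic) (hdeg : f.natDegree = q)
    (g₁ g₂ : ℂ → ℝ) (hc₁ : Continuous g₁) (hc₂ : Continuous g₂)
    (hv₁ : ∀ z ∈ filledJulia f, g₁ z = 0) (hv₂ : ∀ z ∈ filledJulia f, g₂ z = 0)
    (hp₁ : ∀ z ∉ filledJulia f, 0 < g₁ z) (hp₂ : ∀ z ∉ filledJulia f, 0 < g₂ z)
    (hf₁ : ∀ z : ℂ, g₁ (f.eval z) = q * g₁ z) (hf₂ : ∀ z : ℂ, g₂ (f.eval z) = q * g₂ z)
    (ht₁ : Filter.Tendsto (fun z : ℂ => g₁ z - Real.log (‖z‖))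
      (Filter.comap (fun z : ℂ => ‖z‖) Filter.atTop) (nhds 0))
    (ht₂ : Filter.Tendsto (fun z : ℂ => g₂ z - Real.log (‖z‖))
      (Filter.comap (fun z : ℂ => ‖z‖) Filter.atTop) (nhds 0)) :
    g₁ = g₂ := by
  set h : ℂ → ℝ := fun z => g₁ z - g₂ z with hh
  have hch : Continuous h := hc₁.sub hc₂
  -- h tends to 0 at infinity
  have hth : Filter.Tendsto h (Filter.comap (fun z : ℂ => ‖z‖) Filter.atTop)
      (nhds 0) := by
    have := ht₁.sub ht₂
    simpa using this
  -- hence h is eventually ≤ 1 in absolute value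
  have h1 : ∃ R : ℝ, ∀ z : ℂ, R ≤ ‖z‖ → |h z| ≤ 1 := by
    have := Metric.tendsto_nhds.1 hth 1 one_pos
    rw [Filter.eventually_comap] at this
    rcases (Filter.eventually_atTop.1 this) with ⟨R, hR⟩
    exact ⟨R, fun z hz => by
      have := hR ‖z‖ hz z rfl
      simp only [Real.dist_eq, sub_zero] at this
      exact this.le⟩
  obtain ⟨R, hR⟩ := h1
  -- bound on the closed ball
  obtain ⟨M₀, hM₀⟩ : ∃ M₀ : ℝ, ∀ z ∈ Metric.closedBall (0 : ℂ) R, |h z| ≤ M₀ := by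
    rcases (isCompact_closedBall (0 : ℂ) R).exists_bound_of_continuousOn
      ((hch.continuousOn).norm) with ⟨M₀, hM₀⟩
    exact ⟨M₀, fun z hz => by simpa [Real.norm_eq_abs] using hM₀ z hz⟩
  set M : ℝ := max M₀ 1 with hM
  have hMb : ∀ z : ℂ, |h z| ≤ M := by
    intro z
    by_cases hz : ‖z‖ ≤ R
    · exact le_trans (hM₀ z (by simpa [Metric.mem_closedBall, Complex.dist_eq] using hz))
        (le_max_left _ _)
    · exact le_trans (hR z (le_of_lt (not_le.1 hz))) (le_max_right _ _)
  have hM0 : 0 ≤ M := le_trans (abs_nonneg _) (hMb 0)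
  -- functional equation for h along the orbit
  have horb : ∀ (z : ℂ) (n : ℕ), h ((fun w : ℂ => f.eval w)^[n] z) = (q : ℝ) ^ n * h z := by
    intro z n
    induction n with
    | zero => simp
    | succ n ih =>
      rw [Function.iterate_succ_apply']
      simp only [hh] at ih ⊢
      rw [hf₁, hf₂, pow_succ]
      ring_nf
      ring_nf at ih
      linear_combination (q : ℝ) * ih
  ext z
  have key : ∀ n : ℕ, |h z| ≤ M / (q : ℝ) ^ n := by
    intro n
    have hq1 : (1 : ℝ) ≤ (q : ℝ) := by exact_mod_cast le_trans (by norm_num) hq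
    have hqn : (0 : ℝ) < (q : ℝ) ^ n := pow_pos (lt_of_lt_of_le one_pos hq1) n
    have := hMb ((fun w : ℂ => f.eval w)^[n] z)
    rw [horb z n, abs_mul, abs_of_pos hqn] at this
    rw [le_div_iff₀ hqn]
    linarith
  have hlim : Filter.Tendsto (fun n : ℕ => M / (q : ℝ) ^ n) Filter.atTop (nhds 0) := by
    have hq1 : (1 : ℝ) < (q : ℝ) := by exact_mod_cast lt_of_lt_of_le one_lt_two hq
    have hq0 : (0 : ℝ) < q := lt_trans one_pos hq1
    have : Filter.Tendsto (fun n : ℕ => ((q : ℝ)⁻¹) ^ n) Filter.atTop (nhds 0) :=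
      tendsto_pow_atTop_nhds_zero_of_lt_one (by positivity) (inv_lt_one_of_one_lt₀ hq1)
    have := this.const_mul M
    simpa [div_eq_mul_inv, inv_pow] using this
  have : |h z| ≤ 0 := ge_of_tendsto' hlim key
  have hz0 : h z = 0 := abs_eq_zero.1 (le_antisymm this (abs_nonneg _))
  have : g₁ z - g₂ z = 0 := hz0
  linarith
end

section
/- For every q ≥ 2, the shift locus S_q is an open subset of ℂ^(q-1). -/
set_option maxHeartbeats 800000

/-- The normalized degree `q` polynomial `z ↦ z^q + a₂ z^(q-2) + ⋯ + a_q`, where the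
coefficient `a_{i+2}` (for `i : Fin (q-1)`) multiplies `z^(q-2-i)`. -/
noncomputable def normPoly (q : ℕ) (a : Fin (q - 1) → ℂ) : ℂ → ℂ :=
  fun z => z ^ q + ∑ i : Fin (q - 1), a i * z ^ (q - 2 - (i : ℕ))

/-- The degree `q` shift locus: the set of coefficient vectors `a` such that every
critical point of the normalized polynomial `f_a` has unbounded forward orbit. -/
def shiftLocus (q : ℕ) : Set (Fin (q - 1) → ℂ) :=
  {a | ∀ c : ℂ, deriv (normPoly q a) c = 0 →
    ¬ Bornology.IsBounded (Set.range fun n : ℕ => (normPoly q a)^[n] c)}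

open Filter Bornology Set Metric Topology

/-- Joint continuity of `(a, z) ↦ f_a(z)`. -/
lemma continuous_normPoly (q : ℕ) :
    Continuous fun p : (Fin (q - 1) → ℂ) × ℂ => normPoly q p.1 p.2 := by
  unfold normPoly
  exact (continuous_snd.pow q).add <| continuous_finset_sum _ fun i _ =>
    ((continuous_apply i).comp continuous_fst).mul (continuous_snd.pow _)

lemma normPoly_hasDerivAt (q : ℕ) (b : Fin (q - 1) → ℂ) (z : ℂ) :
    HasDerivAt (normPoly q b)
      ((q : ℂ) * z ^ (q - 1) +
        ∑ i : Fin (q - 1), b i * (((q - 2 - (i : ℕ) : ℕ) : ℂ) * z ^ (q - 2 - (i : ℕ) - 1))) z := by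
  have h1 : HasDerivAt (fun z : ℂ => z ^ q) ((q : ℂ) * z ^ (q - 1)) z := hasDerivAt_pow q z
  have h2 : HasDerivAt (fun z : ℂ => ∑ i : Fin (q - 1), b i * z ^ (q - 2 - (i : ℕ)))
      (∑ i : Fin (q - 1), b i * (((q - 2 - (i : ℕ) : ℕ) : ℂ) * z ^ (q - 2 - (i : ℕ) - 1))) z :=
    HasDerivAt.fun_sum fun i _ => (hasDerivAt_pow _ z).const_mul (b i)
  exact h1.add h2

lemma deriv_normPoly (q : ℕ) (b : Fin (q - 1) → ℂ) (z : ℂ) :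
    deriv (normPoly q b) z =
      (q : ℂ) * z ^ (q - 1) +
        ∑ i : Fin (q - 1), b i * (((q - 2 - (i : ℕ) : ℕ) : ℂ) * z ^ (q - 2 - (i : ℕ) - 1)) :=
  (normPoly_hasDerivAt q b z).deriv

/-- Joint continuity of `(a, z) ↦ f_a'(z)`. -/
lemma continuous_derivExpr (q : ℕ) :
    Continuous fun p : (Fin (q - 1) → ℂ) × ℂ => deriv (normPoly q p.1) p.2 := by
  simp only [deriv_normPoly]
  exact (continuous_const.mul (continuous_snd.pow _)).add <| continuous_finset_sum _ fun i _ =>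
    ((continuous_apply i).comp continuous_fst).mul (continuous_const.mul (continuous_snd.pow _))

/-- Joint continuity of `(a, z) ↦ f_a^[n](z)`. -/
lemma continuous_iter (q n : ℕ) :
    Continuous fun p : (Fin (q - 1) → ℂ) × ℂ => (normPoly q p.1)^[n] p.2 := by
  induction n with
  | zero => simpa using continuous_snd
  | succ n ih =>
      have : (fun p : (Fin (q - 1) → ℂ) × ℂ => (normPoly q p.1)^[n + 1] p.2)
          = fun p => normPoly q p.1 ((normPoly q p.1)^[n] p.2) := by
        funext p; exact Function.iterate_succ_apply' _ _ _
      rw [this]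
      exact (continuous_normPoly q).comp (continuous_fst.prodMk ih)

/-- Growth estimate: outside radius `2 + A`, the polynomial at least doubles the norm. -/
lemma normPoly_growth {q : ℕ} (hq : 2 ≤ q) {A : ℝ} (hA : 0 ≤ A) {b : Fin (q - 1) → ℂ}
    (hb : ∑ i, ‖b i‖ ≤ A) {z : ℂ} (hz : 2 + A ≤ ‖z‖) :
    2 * ‖z‖ ≤ ‖normPoly q b z‖ := by
  have hz1 : (1 : ℝ) ≤ ‖z‖ := by linarith
  have hS : ‖∑ i : Fin (q - 1), b i * z ^ (q - 2 - (i : ℕ))‖ ≤ A * ‖z‖ ^ (q - 2) := by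
    calc ‖∑ i : Fin (q - 1), b i * z ^ (q - 2 - (i : ℕ))‖
        ≤ ∑ i : Fin (q - 1), ‖b i * z ^ (q - 2 - (i : ℕ))‖ := norm_sum_le _ _
      _ ≤ ∑ i : Fin (q - 1), ‖b i‖ * ‖z‖ ^ (q - 2) := by
          refine Finset.sum_le_sum fun i _ => ?_
          rw [norm_mul, norm_pow]
          exact mul_le_mul_of_nonneg_left
            (pow_le_pow_right₀ hz1 (Nat.sub_le _ _)) (norm_nonneg _)
      _ = (∑ i, ‖b i‖) * ‖z‖ ^ (q - 2) := by rw [Finset.sum_mul]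
      _ ≤ A * ‖z‖ ^ (q - 2) := by
          exact mul_le_mul_of_nonneg_right hb (by positivity)
  have hzq : ‖z‖ ^ q = ‖z‖ ^ (q - 2) * ‖z‖ ^ 2 := by
    rw [← pow_add]; congr 1; omega
  have hlow : ‖z‖ ^ (q - 2) * (‖z‖ ^ 2 - A) ≤ ‖normPoly q b z‖ := by
    have h1 : ‖z‖ ^ q - ‖∑ i : Fin (q - 1), b i * z ^ (q - 2 - (i : ℕ))‖
        ≤ ‖normPoly q b z‖ := by
      have := norm_sub_norm_le (z ^ q)
        (-(∑ i : Fin (q - 1), b i * z ^ (q - 2 - (i : ℕ))))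
      rw [sub_neg_eq_add, norm_neg] at this
      simpa [normPoly, norm_pow] using this
    nlinarith [hS]
  have hone : (1 : ℝ) ≤ ‖z‖ ^ (q - 2) := one_le_pow₀ hz1
  have hq2 : 2 * ‖z‖ ≤ ‖z‖ ^ 2 - A := by nlinarith
  have hnn : 0 ≤ ‖z‖ ^ 2 - A := le_trans (by positivity) hq2
  nlinarith

/-- Once an orbit point leaves the disk of radius `2 + A`, the orbit is unbounded. -/
lemma normPoly_unbounded {q : ℕ} (hq : 2 ≤ q) {A : ℝ} (hA : 0 ≤ A) {b : Fin (q - 1) → ℂ}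
    (hb : ∑ i, ‖b i‖ ≤ A) {c : ℂ} {n : ℕ} (h : 2 + A ≤ ‖(normPoly q b)^[n] c‖) :
    ¬ IsBounded (Set.range fun m : ℕ => (normPoly q b)^[m] c) := by
  have key : ∀ m : ℕ, 2 ^ m * (2 + A) ≤ ‖(normPoly q b)^[n + m] c‖ := by
    intro m
    induction m with
    | zero => simpa using h
    | succ m ih =>
        have hge : 2 + A ≤ ‖(normPoly q b)^[n + m] c‖ := by
          have h1 : (1:ℝ) * (2 + A) ≤ 2 ^ m * (2 + A) :=
            mul_le_mul_of_nonneg_right (one_le_pow₀ one_le_two) (by linarith)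
          linarith [ih, h1]
        have := normPoly_growth hq hA hb hge
        have heq : (normPoly q b)^[n + (m + 1)] c
            = normPoly q b ((normPoly q b)^[n + m] c) := by
          rw [show n + (m + 1) = (n + m) + 1 by ring, Function.iterate_succ_apply']
        rw [heq]
        calc 2 ^ (m + 1) * (2 + A) = 2 * (2 ^ m * (2 + A)) := by ring
          _ ≤ 2 * ‖(normPoly q b)^[n + m] c‖ := by linarith
          _ ≤ _ := this
  intro hbd
  obtain ⟨C, hC⟩ := isBounded_iff_forall_norm_le.mp hbd
  obtain ⟨m, hm⟩ := pow_unbounded_of_one_lt (C / (2 + A)) one_lt_two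
  have h2A : (0:ℝ) < 2 + A := by linarith
  have : C < 2 ^ m * (2 + A) := by
    rw [div_lt_iff₀ h2A] at hm; linarith
  have := hC _ ⟨n + m, rfl⟩
  linarith [key m]

/-- The shift locus is an open subset of `ℂ^(q-1)`. -/
theorem stmt_13 (q : ℕ) (hq : 2 ≤ q) : IsOpen (shiftLocus q) := by
  rw [Metric.isOpen_iff]
  intro a ha
  by_contra hcon
  push_neg at hcon
  -- extract a sequence b k → a with b k ∉ shiftLocus q
  have hseq : ∀ k : ℕ, ∃ b, dist b a < 1 / (k + 1) ∧ b ∉ shiftLocus q := by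
    intro k
    have hpos : (0 : ℝ) < 1 / (k + 1) := by positivity
    obtain ⟨b, hb1, hb2⟩ := Set.not_subset.mp (hcon _ hpos)
    exact ⟨b, by simpa [Metric.mem_ball] using hb1, hb2⟩
  choose b hbd hbS using hseq
  -- uniform coefficient bound
  set A : ℝ := ∑ i, (‖a i‖ + 1) with hAdef
  have hA0 : 0 ≤ A := Finset.sum_nonneg fun i _ => by positivity
  have hbA : ∀ k, ∑ i, ‖b k i‖ ≤ A := by
    intro k
    refine Finset.sum_le_sum fun i _ => ?_
    have h1 : dist (b k i) (a i) ≤ dist (b k) a := dist_le_pi_dist _ _ i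
    have h2 : dist (b k) a < 1 := lt_of_lt_of_le (hbd k) (by
      rw [div_le_one (by positivity)]; linarith [Nat.cast_nonneg (α := ℝ) k])
    calc ‖b k i‖ = ‖a i + (b k i - a i)‖ := by ring_nf
      _ ≤ ‖a i‖ + ‖b k i - a i‖ := norm_add_le _ _
      _ ≤ ‖a i‖ + 1 := by
          rw [← dist_eq_norm]
          linarith [lt_of_le_of_lt h1 h2]
  -- critical points with bounded orbits
  have hcrit : ∀ k, ∃ c, deriv (normPoly q (b k)) c = 0 ∧
      IsBounded (Set.range fun n : ℕ => (normPoly q (b k))^[n] c) := by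
    intro k
    have := hbS k
    simp only [shiftLocus, Set.mem_setOf_eq, not_forall, not_not] at this
    obtain ⟨c, hc1, hc2⟩ := this
    exact ⟨c, hc1, hc2⟩
  choose c hc1 hc2 using hcrit
  -- bounded orbits stay in the disk of radius 2 + A
  have horb : ∀ k n, ‖(normPoly q (b k))^[n] (c k)‖ < 2 + A := by
    intro k n
    by_contra hlt
    push_neg at hlt
    exact normPoly_unbounded hq hA0 (hbA k) hlt (hc2 k)
  -- Bolzano–Weierstrass
  have hcball : ∀ k, c k ∈ closedBall (0 : ℂ) (2 + A) := by
    intro k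
    have := horb k 0
    simpa [mem_closedBall, dist_eq_norm] using this.le
  obtain ⟨x, -, φ, hφ, hx⟩ :=
    tendsto_subseq_of_bounded (isBounded_closedBall (x := (0:ℂ)) (r := 2 + A)) hcball
  -- b ∘ φ → a
  have hbtend : Tendsto (fun k => b (φ k)) atTop (𝓝 a) := by
    rw [tendsto_iff_dist_tendsto_zero]
    refine squeeze_zero (fun k => dist_nonneg) (fun k => (hbd (φ k)).le) ?_
    have h1 : Tendsto (fun k : ℕ => 1 / ((k : ℝ) + 1)) atTop (𝓝 0) :=
      tendsto_one_div_add_atTop_nhds_zero_nat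
    refine squeeze_zero (fun k => by positivity) (fun k => ?_) h1
    have : (k : ℝ) ≤ (φ k : ℝ) := by exact_mod_cast (hφ.id_le k)
    gcongr
  have hptend : Tendsto (fun k => (b (φ k), c (φ k))) atTop (𝓝 (a, x)) :=
    hbtend.prodMk_nhds hx
  -- x is a critical point of f_a
  have hderiv : deriv (normPoly q a) x = 0 := by
    have h1 : Tendsto (fun k => deriv (normPoly q (b (φ k))) (c (φ k))) atTop
        (𝓝 (deriv (normPoly q a) x)) := by
      have h := Tendsto.comp ((continuous_derivExpr q).tendsto (a, x)) hptend
      simpa [Function.comp_def] using h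
    have h2 : Tendsto (fun k => deriv (normPoly q (b (φ k))) (c (φ k))) atTop (𝓝 0) := by
      have : (fun k => deriv (normPoly q (b (φ k))) (c (φ k))) = fun _ => (0 : ℂ) := by
        funext k; exact hc1 (φ k)
      rw [this]; exact tendsto_const_nhds
    exact tendsto_nhds_unique h1 h2
  -- the orbit of x under f_a is bounded
  have hbound : ∀ n, ‖(normPoly q a)^[n] x‖ ≤ 2 + A := by
    intro n
    have h1 : Tendsto (fun k => (normPoly q (b (φ k)))^[n] (c (φ k))) atTop
        (𝓝 ((normPoly q a)^[n] x)) := by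
      have h := Tendsto.comp ((continuous_iter q n).tendsto (a, x)) hptend
      simpa [Function.comp_def] using h
    exact le_of_tendsto h1.norm (Eventually.of_forall fun k => (horb (φ k) n).le)
  exact ha x hderiv (isBounded_iff_forall_norm_le.mpr
    ⟨2 + A, by rintro _ ⟨n, rfl⟩; exact hbound n⟩)
end
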